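/- A cograph with at least two vertices is connected if and only if its complement is disconnected. -/

import Mathlib

open SimpleGraph

section CographAux

variable {V : Type*}

/-- Build a `P4` embedding from four vertices with the right adjacency pattern. -/
lemma p4_of_pattern {G : SimpleGraph V} {a b c d : V}
    (hab : G.Adj a b) (hbc : G.Adj b c) (hcd : G.Adj c d)
    (hac : ¬ G.Adj a c) (had : ¬ G.Adj a d) (hbd : ¬ G.Adj b d)
    (nac : a ≠ c) (nad : a ≠ d) (nbd : b ≠ d) :
    Nonempty (pathGraph 4 ↪g G) := by
  have nab : a ≠ b := hab.ne
  have nbc : b ≠ c := hbc.ne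
  have ncd : c ≠ d := hcd.ne
  have hba := hab.symm
  have hcb := hbc.symm
  have hdc := hcd.symm
  have hca : ¬ G.Adj c a := fun h => hac h.symm
  have hda : ¬ G.Adj d a := fun h => had h.symm
  have hdb : ¬ G.Adj d b := fun h => hbd h.symm
  refine ⟨⟨⟨![a, b, c, d], ?_⟩, ?_⟩⟩
  · intro i j h
    fin_cases i <;> fin_cases j <;> simp_all
  · intro i j
    show G.Adj (![a, b, c, d] i) (![a, b, c, d] j) ↔ _
    fin_cases i <;> fin_cases j <;>
      simp_all [pathGraph_adj, SimpleGraph.irrefl] <;> decide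
end CographAux

section CographAux2

variable {V : Type*}

/-- `P4`-freeness passes to the complement, since `P4` is self-complementary. -/
lemma p4_free_compl {G : SimpleGraph V} (h : IsEmpty (pathGraph 4 ↪g G)) :
    IsEmpty (pathGraph 4 ↪g Gᶜ) := by
  by_contra h'
  rw [not_isEmpty_iff] at h'
  obtain ⟨e⟩ := h'
  have hadj : ∀ i j : Fin 4, (pathGraph 4).Adj i j → ¬ G.Adj (e i) (e j) := by
    intro i j hij
    exact ((compl_adj G _ _).mp (e.map_rel_iff.mpr hij)).2
  have hnadj : ∀ i j : Fin 4, i ≠ j → ¬ (pathGraph 4).Adj i j → G.Adj (e i) (e j) := by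
    intro i j hne hij
    by_contra hG
    exact hij (e.map_rel_iff.mp ((compl_adj G _ _).mpr ⟨fun hh => hne (e.injective hh), hG⟩))
  have h13 : ¬ (pathGraph 4).Adj 1 3 := by rw [pathGraph_adj]; decide
  have h30 : ¬ (pathGraph 4).Adj 3 0 := by rw [pathGraph_adj]; decide
  have h02 : ¬ (pathGraph 4).Adj 0 2 := by rw [pathGraph_adj]; decide
  have a01 : (pathGraph 4).Adj 0 1 := by rw [pathGraph_adj]; decide
  have a12 : (pathGraph 4).Adj 1 2 := by rw [pathGraph_adj]; decide
  have a23 : (pathGraph 4).Adj 2 3 := by rw [pathGraph_adj]; decide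
  refine h.false (p4_of_pattern (a := e 1) (b := e 3) (c := e 0) (d := e 2)
    (hnadj 1 3 (by decide) h13) (hnadj 3 0 (by decide) h30) (hnadj 0 2 (by decide) h02)
    (fun hh => hadj 0 1 a01 hh.symm) (fun hh => hadj 1 2 a12 hh)
    (fun hh => hadj 2 3 a23 hh.symm)
    (fun hh => (by decide : (1 : Fin 4) ≠ 0) (e.injective hh))
    (fun hh => (by decide : (1 : Fin 4) ≠ 2) (e.injective hh))
    (fun hh => (by decide : (3 : Fin 4) ≠ 2) (e.injective hh))).some

/-- Complement commutes with induced subgraphs. -/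
lemma induce_compl_eq {G : SimpleGraph V} (s : Set V) :
    (G.induce s)ᶜ = Gᶜ.induce s := by
  ext a b
  simp only [compl_adj, comap_adj, Function.Embedding.coe_subtype]
  constructor
  · rintro ⟨hne, hn⟩
    exact ⟨fun hh => hne (Subtype.ext hh), hn⟩
  · rintro ⟨hne, hn⟩
    exact ⟨fun hh => hne (congrArg Subtype.val hh), hn⟩

/-- A walk avoiding `v` yields reachability in the graph induced on `{x | x ≠ v}`. -/
lemma reachable_induce_of_walk {G : SimpleGraph V} {v : V} :
    ∀ {a b : V} (p : G.Walk a b), v ∉ p.support →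
      ∀ (ha : a ∈ {x | x ≠ v}) (hb : b ∈ {x | x ≠ v}),
      (G.induce {x | x ≠ v}).Reachable ⟨a, ha⟩ ⟨b, hb⟩ := by
  intro a b p
  induction p with
  | nil => intro _ ha hb; exact Reachable.refl _
  | @cons a c b h q ih =>
    intro hv ha hb
    rw [SimpleGraph.Walk.support_cons] at hv
    simp only [List.mem_cons, not_or] at hv
    have hc : c ∈ {x | x ≠ v} := fun hh => hv.2 (hh ▸ q.start_mem_support)
    have hadj : (G.induce {x | x ≠ v}).Adj ⟨a, ha⟩ ⟨c, hc⟩ := h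
    exact hadj.reachable.trans (ih hv.2 hc hb)

/-- From any walk from `v`, extract a neighbour of `v` reachable (avoiding `v`)
from the endpoint. -/
lemma exists_nbr_aux {G : SimpleGraph V} {v : V} :
    ∀ (n : ℕ) {w : V} (hw : w ≠ v) (p : G.Walk v w), p.length ≤ n →
      ∃ (u : V) (hu : u ≠ v), G.Adj v u ∧
        (G.induce {x | x ≠ v}).Reachable ⟨w, hw⟩ ⟨u, hu⟩ := by
  classical
  intro n
  induction n with
  | zero =>
    intro w hw p hp
    have := p.eq_of_length_eq_zero (Nat.le_zero.mp hp)
    exact absurd this.symm hw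
  | succ n ih =>
    intro w hw p hp
    cases p with
    | nil => exact absurd rfl hw.symm
    | @cons _ c _ h q =>
      by_cases hvq : v ∈ q.support
      · refine ih hw (q.dropUntil v hvq) ?_
        have h1 := q.length_dropUntil_le hvq
        rw [SimpleGraph.Walk.length_cons] at hp
        omega
      · exact ⟨c, h.ne', h, (reachable_induce_of_walk q hvq h.ne' hw).symm⟩

lemma exists_nbr {G : SimpleGraph V} {v : V} (hconn : G.Connected) {w : V} (hw : w ≠ v) :
    ∃ (u : V) (hu : u ≠ v), G.Adj v u ∧
      (G.induce {x | x ≠ v}).Reachable ⟨w, hw⟩ ⟨u, hu⟩ := by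
  obtain ⟨p⟩ := hconn.preconnected v w
  exact exists_nbr_aux p.length hw p le_rfl

/-- Key combinatorial step: if `G` is a connected cograph and `G - v` is
disconnected, then `v` is adjacent to every other vertex. -/
lemma adj_all_of_induce_disconnected {G : SimpleGraph V}
    (hcog : IsEmpty (pathGraph 4 ↪g G)) (hconn : G.Connected) (v : V)
    (hdis : ¬ (G.induce {x | x ≠ v}).Connected) :
    ∀ w, w ≠ v → G.Adj v w := by
  intro w hw
  set G' := G.induce {x | x ≠ v} with hG'
  have hne : Nonempty {x | x ≠ v} := ⟨⟨w, hw⟩⟩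
  have hprec : ∃ x y, ¬ G'.Reachable x y := by
    by_contra hb
    push_neg at hb
    exact hdis ((connected_iff _).mpr ⟨fun x y => hb x y, hne⟩)
  obtain ⟨x, y, hxy⟩ := hprec
  -- step lemma
  have step : ∀ (a c : V) (ha : a ≠ v) (hc : c ≠ v),
      G.Adj v a → G.Adj a c → G.Adj v c := by
    intro a c ha hc hva hac
    by_contra hvc
    have hz : ∃ z : {x | x ≠ v}, ¬ G'.Reachable ⟨a, ha⟩ z := by
      by_contra hb
      push_neg at hb
      exact hxy ((hb x).symm.trans (hb y))
    obtain ⟨z, hz⟩ := hz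
    obtain ⟨u, hu, hvu, hru⟩ := exists_nbr hconn z.2
    have hzu : G'.Reachable z ⟨u, hu⟩ := by
      have : (⟨z.1, z.2⟩ : {x | x ≠ v}) = z := rfl
      exact this ▸ hru
    have hau : ¬ G'.Reachable ⟨a, ha⟩ ⟨u, hu⟩ := fun hr => hz (hr.trans hzu.symm)
    have hnau : ¬ G.Adj a u := by
      intro hA
      exact hau (SimpleGraph.Adj.reachable (by exact hA : G'.Adj ⟨a, ha⟩ ⟨u, hu⟩))
    have hGac : G'.Adj ⟨a, ha⟩ ⟨c, hc⟩ := hac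
    have hncu : ¬ G.Adj c u := by
      intro hA
      exact hau (hGac.reachable.trans
        (SimpleGraph.Adj.reachable (by exact hA : G'.Adj ⟨c, hc⟩ ⟨u, hu⟩)))
    have nau : a ≠ u := fun hh => hau (hh ▸ Reachable.refl _)
    have ncu : c ≠ u := fun hh => hnau (hh ▸ hac)
    -- P4 : c - a - v - u
    exact hcog.false (p4_of_pattern (a := c) (b := a) (c := v) (d := u)
      hac.symm hva.symm hvu (fun hh => hvc hh.symm) hncu hnau
      hc ncu nau).some
  -- propagate along a walk in G'
  have walkstep : ∀ (p q : {x | x ≠ v}) (_ : G'.Reachable p q),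
      G.Adj v p.1 → G.Adj v q.1 := by
    intro p q hr
    obtain ⟨wk⟩ := hr
    induction wk with
    | nil => exact id
    | @cons p' c' q' h wk' ih =>
      intro hvp
      exact ih (step p'.1 c'.1 p'.2 c'.2 hvp h)
  obtain ⟨u, hu, hvu, hru⟩ := exists_nbr hconn hw
  exact walkstep ⟨u, hu⟩ ⟨w, hw⟩ hru.symm hvu

/-- If some vertex is adjacent to all others, the complement is disconnected. -/
lemma not_compl_connected_of_dominating {G : SimpleGraph V} [Fintype V]
    (h2 : 2 ≤ Fintype.card V) {v : V} (hall : ∀ w, w ≠ v → G.Adj v w) :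
    ¬ Gᶜ.Connected := by
  intro hconn
  obtain ⟨w, hw⟩ := Fintype.exists_ne_of_one_lt_card (by omega) v
  obtain ⟨p⟩ := hconn.preconnected v w
  cases p with
  | nil => exact hw rfl
  | cons h q =>
    obtain ⟨hne, hnadj⟩ := (compl_adj G _ _).mp h
    exact hnadj (hall _ (Ne.symm hne))

/-- If a graph is disconnected (with a nonempty vertex set), its complement is
connected. -/
lemma compl_connected_of_not_connected {G : SimpleGraph V} [Fintype V]
    (h2 : 2 ≤ Fintype.card V) (h : ¬ G.Connected) : Gᶜ.Connected := by
  have hne : Nonempty V := Fintype.card_pos_iff.mp (by omega)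
  have hprec : ∃ x y, ¬ G.Reachable x y := by
    by_contra hb
    push_neg at hb
    exact h ((connected_iff _).mpr ⟨fun x y => hb x y, hne⟩)
  obtain ⟨u, w, huw⟩ := hprec
  have key : ∀ a b : V, ¬ G.Reachable a b → Gᶜ.Reachable a b := by
    intro a b hab
    have hne' : a ≠ b := fun hh => hab (hh ▸ Reachable.refl _)
    have : Gᶜ.Adj a b := (compl_adj G a b).mpr ⟨hne', fun hA => hab hA.reachable⟩
    exact this.reachable
  refine (connected_iff _).mpr ⟨fun a b => ?_, hne⟩
  by_cases hab : G.Reachable a b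
  · by_cases hau : G.Reachable a u
    · have hbu : G.Reachable b u := hab.symm.trans hau
      have h1 : ¬ G.Reachable a w := fun hr => huw (hau.symm.trans hr)
      have h2' : ¬ G.Reachable b w := fun hr => huw (hbu.symm.trans hr)
      exact (key a w h1).trans (key b w h2').symm
    · have hbu : ¬ G.Reachable b u := fun hr => hau (hab.trans hr)
      exact (key a u hau).trans (key b u hbu).symm
  · exact key a b hab

end CographAux2

section KeyLemma

/-- The main lemma: a cograph on at least two vertices cannot have both itself
and its complement connected. Proved by strong induction on the number of
vertices. -/
lemma cograph_key : ∀ (n : ℕ) {V : Type*} [Fintype V], Fintype.card V = n → 2 ≤ n →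
    ∀ G : SimpleGraph V, IsEmpty (pathGraph 4 ↪g G) →
      G.Connected → Gᶜ.Connected → False := by
  intro n
  induction n using Nat.strong_induction_on with
  | _ n ih =>
    intro V _ hn h2 G hcog hc hcc
    classical
    rcases eq_or_lt_of_le h2 with h2' | h3
    · -- base case : exactly two vertices
      rw [← h2'] at hn
      have h2n : Nat.card V = 2 := by rw [Nat.card_eq_fintype_card, hn]
      obtain ⟨u, w, huw, huniv⟩ := Nat.card_eq_two_iff.mp h2n
      have hadj : ∀ (H : SimpleGraph V), H.Connected → H.Adj u w := by
        intro H hH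
        obtain ⟨p⟩ := hH.preconnected u w
        cases p with
        | nil => exact absurd rfl huw
        | @cons _ c _ h q =>
          have : c = u ∨ c = w := by
            have hcin : c ∈ ({u, w} : Set V) := by rw [huniv]; trivial
            simpa using hcin
          rcases this with hcu | hcw
          · exact absurd hcu h.ne'
          · exact hcw ▸ h
      exact ((compl_adj G u w).mp (hadj Gᶜ hcc)).2 (hadj G hc)
    · -- inductive step : at least three vertices
      have hne : Nonempty V := Fintype.card_pos_iff.mp (by omega)
      obtain ⟨v⟩ := hne
      set s : Set V := {x | x ≠ v} with hs
      have hcards : Fintype.card s = n - 1 := by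
        have : Fintype.card {x // ¬ x = v} = Fintype.card V - Fintype.card {x // x = v} :=
          Fintype.card_subtype_compl _
        rw [Fintype.card_subtype_eq] at this
        simp only [hs, hn] at this; exact this
      have hcog' : IsEmpty (pathGraph 4 ↪g G.induce s) :=
        ⟨fun e => hcog.false ((SimpleGraph.Embedding.induce s).comp e)⟩
      by_cases hG' : (G.induce s).Connected
      · -- then (G.induce s)ᶜ is disconnected; apply the key step to Gᶜ
        have hdis : ¬ (Gᶜ.induce s).Connected := by
          intro hcon
          refine ih (n - 1) (by omega) hcards (by omega) (G.induce s) hcog' hG' ?_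
          rw [induce_compl_eq]
          exact hcon
        have hall := adj_all_of_induce_disconnected (p4_free_compl hcog) hcc v hdis
        have := not_compl_connected_of_dominating (G := Gᶜ) (by omega) hall
        rw [compl_compl] at this
        exact this hc
      · have hall := adj_all_of_induce_disconnected hcog hc v hG'
        exact not_compl_connected_of_dominating (G := G) (by omega) hall hcc

end KeyLemma

/-- A cograph with at least two vertices is connected iff its complement is disconnected. -/
theorem cograph_connected_iff_compl_disconnected {V : Type*} [Fintype V]
    (G : SimpleGraph V) (hcard : 2 ≤ Fintype.card V)
    (hcog : IsEmpty (pathGraph 4 ↪g G)) :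
    G.Connected ↔ ¬ Gᶜ.Connected := by
  constructor
  · intro hc hcc
    exact cograph_key (Fintype.card V) rfl hcard G hcog hc hcc
  · intro h
    by_contra hGc
    exact h (compl_connected_of_not_connected hcard hGc)
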